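/- Let I be a nonzero fractional ideal of B, let q_I ∈ K× be such that I ∩ K = q_I·k[t], and set I* = q_I^{−1}·I (the normalized ideal). Then k[t][x] ⊆ B ⊆ I*. Moreover, setting δ_I = dim_k(I*/k[t][x]) (the normalized index, which is finite) and exp(I) = min{ deg(a) : a ∈ k[t], a ≠ 0, a·I* ⊆ k[t][x] } (the normalized exponent), one has exp(I) ≤ δ_I ≤ n·exp(I); in particular 0 ≤ δ_B ≤ δ_I and 0 ≤ exp(B) ≤ exp(I). -/

import Mathlib

open Polynomial Module

/-- A module over `k[t]` spanned by `m` elements, all annihilated by a nonzero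
polynomial `a`, is finite over `k` of dimension at most `m * a.natDegree`. -/
theorem aux_torsion_fin {k : Type*} [Field k] {M : Type*} [AddCommGroup M]
    [Module (Polynomial k) M] [Module k M] [IsScalarTower k (Polynomial k) M]
    {m : ℕ} (g : Fin m → M)
    (hg : Submodule.span (Polynomial k) (Set.range g) = ⊤)
    (a : Polynomial k) (ha : a ≠ 0) (haM : ∀ y : M, a • y = 0) :
    Module.Finite k M ∧ Module.finrank k M ≤ m * a.natDegree := by
  classical
  by_cases he0 : a.natDegree = 0
  · set c := a.coeff 0 with hcdef
    have hc : a = Polynomial.C c := Polynomial.eq_C_of_natDegree_eq_zero he0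
    have hc0 : c ≠ 0 := by
      intro h; apply ha; rw [hc, h, map_zero]
    have hsub : Subsingleton M := by
      constructor
      intro y z
      have key : ∀ w : M, w = 0 := by
        intro w
        have h1 : (Polynomial.C c⁻¹ * a) • w = 0 := by
          rw [mul_smul, haM w, smul_zero]
        rwa [hc, ← map_mul, inv_mul_cancel₀ hc0, map_one, one_smul] at h1
      rw [key y, key z]
    haveI := hsub
    refine ⟨Module.Finite.of_surjective (0 : k →ₗ[k] M) ?_, ?_⟩
    · intro y; exact ⟨0, Subsingleton.elim _ _⟩
    · simp [Module.finrank_zero_of_subsingleton]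
  · have he1 : 1 ≤ a.natDegree := Nat.one_le_iff_ne_zero.mpr he0
    have ha'monic : (a * Polynomial.C a.leadingCoeff⁻¹).Monic :=
      Polynomial.monic_mul_leadingCoeff_inv ha
    set a' : Polynomial k := a * Polynomial.C a.leadingCoeff⁻¹ with ha'def
    have ha'deg : a'.natDegree = a.natDegree := by
      rw [ha'def, Polynomial.natDegree_mul_C]
      exact inv_ne_zero (Polynomial.leadingCoeff_ne_zero.mpr ha)
    have ha'M : ∀ y : M, a' • y = 0 := by
      intro y
      rw [ha'def, mul_comm, mul_smul, haM, smul_zero]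
    set e := a.natDegree with he
    set G : Fin m × Fin e → M := fun p => (Polynomial.X ^ (p.2 : ℕ) : Polynomial k) • g p.1
      with hG
    set W : Submodule k M := Submodule.span k (Set.range G) with hW
    have hsmall : ∀ r : Polynomial k, r.natDegree < e → ∀ i : Fin m, r • g i ∈ W := by
      intro r hr i
      have hsum : r = ∑ j ∈ Finset.range e, Polynomial.monomial j (r.coeff j) :=
        Polynomial.as_sum_range' r e hr
      rw [hsum, Finset.sum_smul]
      refine Submodule.sum_mem _ ?_
      intro j hj
      have : (Polynomial.monomial j (r.coeff j)) • g i
          = (r.coeff j) • ((Polynomial.X ^ j : Polynomial k) • g i) := by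
        rw [← Polynomial.smul_X_eq_monomial, smul_assoc]
      rw [this]
      refine Submodule.smul_mem _ _ (Submodule.subset_span ?_)
      exact ⟨(i, ⟨j, Finset.mem_range.mp hj⟩), rfl⟩
    have key : ∀ (r : Polynomial k) (i : Fin m), r • g i ∈ W := by
      intro r i
      have hmod : r • g i = (r %ₘ a') • g i := by
        conv_lhs => rw [← Polynomial.modByMonic_add_div r a']
        rw [add_smul, mul_smul, ha'M, add_zero]
      rw [hmod]
      by_cases hr0 : r %ₘ a' = 0
      · rw [hr0, zero_smul]; exact W.zero_mem
      · refine hsmall _ ?_ i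
        have hlt := Polynomial.degree_modByMonic_lt r ha'monic
        have := Polynomial.natDegree_lt_natDegree hr0 hlt
        omega
    -- W is stable under the polynomial action
    have hWstable : ∀ (r : Polynomial k) (y : M), y ∈ W → r • y ∈ W := by
      intro r y hy
      induction hy using Submodule.span_induction with
      | mem z hz =>
        obtain ⟨⟨i, j⟩, rfl⟩ := hz
        have : r • (Polynomial.X ^ (j : ℕ) : Polynomial k) • g i
            = (r * Polynomial.X ^ (j : ℕ)) • g i := by rw [mul_smul]
        rw [hG]; rw [this]; exact key _ i
      | zero => rw [smul_zero]; exact W.zero_mem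
      | add z w _ _ hz hw => rw [smul_add]; exact W.add_mem hz hw
      | smul c z _ hz =>
        have : r • c • z = c • (r • z) := by
          rw [smul_comm]
        rw [this]; exact W.smul_mem _ hz
    have hWtop : W = ⊤ := by
      refine eq_top_iff.mpr ?_
      set W' : Submodule (Polynomial k) M :=
        { carrier := W
          add_mem' := fun h1 h2 => W.add_mem h1 h2
          zero_mem' := W.zero_mem
          smul_mem' := fun r y hy => hWstable r y hy } with hW'
      have h1 : Submodule.span (Polynomial k) (Set.range g) ≤ W' := by
        refine Submodule.span_le.mpr ?_
        rintro _ ⟨i, rfl⟩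
        show g i ∈ W
        have : g i = G (i, ⟨0, he1⟩) := by simp [hG]
        rw [this]; exact Submodule.subset_span ⟨_, rfl⟩
      rw [hg] at h1
      intro y _
      exact h1 Submodule.mem_top
    have hfin : Module.Finite k M := by
      refine Module.finite_def.mpr ?_
      exact ⟨(Set.range G).toFinset, by rw [Set.coe_toFinset, ← hW, hWtop]⟩
    refine ⟨hfin, ?_⟩
    have h1 : Module.finrank k M = Module.finrank k (⊤ : Submodule k M) :=
      (finrank_top k M).symm
    rw [h1, ← hWtop, hW]
    refine le_trans (finrank_span_le_card _) ?_
    calc (Set.range G).toFinset.card = Fintype.card (Set.range G) := Set.toFinset_card _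
      _ ≤ Fintype.card (Fin m × Fin e) := Fintype.card_range_le G
      _ = m * e := by simp

/-- The normalized index `δ_J = dim_k (J / k[t][x])` of a fractional ideal `J` of `B`. -/
noncomputable def normIdx (k : Type*) [Field k] (L : Type*) [Field L] [Algebra (RatFunc k) L]
    [Algebra (Polynomial k) L] [Algebra k L] [IsScalarTower k (Polynomial k) L]
    (B : Type*) [CommRing B] [Algebra B L] [Algebra k B] [IsScalarTower k B L]
    (x : L) (J : FractionalIdeal (nonZeroDivisors B) L) : ℕ :=
  Module.finrank k
    ((Submodule.restrictScalars k (J : Submodule B L)) ⧸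
      (Submodule.comap (Submodule.restrictScalars k (J : Submodule B L)).subtype
        (Submodule.restrictScalars k
          (Subalgebra.toSubmodule (Algebra.adjoin (Polynomial k) ({x} : Set L))))))

/-- The normalized exponent: the least degree of a nonzero `a ∈ k[t]` with `a·J ⊆ k[t][x]`. -/
noncomputable def normExp (k : Type*) [Field k] (L : Type*) [Field L] [Algebra (RatFunc k) L]
    [Algebra (Polynomial k) L]
    (B : Type*) [CommRing B] [Algebra B L]
    (x : L) (J : FractionalIdeal (nonZeroDivisors B) L) : ℕ :=
  sInf {d : ℕ | ∃ a : Polynomial k, a ≠ 0 ∧ a.natDegree = d ∧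
    ∀ z : L, z ∈ J → algebraMap (RatFunc k) L (algebraMap (Polynomial k) (RatFunc k) a) * z ∈
      Algebra.adjoin (Polynomial k) ({x} : Set L)}

set_option maxHeartbeats 1000000 in
set_option synthInstance.maxHeartbeats 1000000 in
/-- `k[t][x] ⊆ B ⊆ I*`, the normalized index is finite, and
`exp(I) ≤ δ_I ≤ n·exp(I)`, `δ_B ≤ δ_I`, `exp(B) ≤ exp(I)`. -/
theorem stmt_7
    {k : Type*} [Field k] [PerfectField k]
    {L : Type*} [Field L] [Algebra (RatFunc k) L]
    (f : Polynomial (Polynomial k)) (n : ℕ)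
    (hfn : f.natDegree = n) (hn : 0 < n)
    (hfmonic : f.Monic)
    (hfirr : Irreducible (f.map (algebraMap (Polynomial k) (RatFunc k))))
    (hfsep : (f.map (algebraMap (Polynomial k) (RatFunc k))).Separable)
    (x : L)
    (hx : Polynomial.aeval x (f.map (algebraMap (Polynomial k) (RatFunc k))) = 0)
    (hxgen : Algebra.adjoin (RatFunc k) ({x} : Set L) = ⊤)
    (B : Type*) [CommRing B] [IsDomain B] [IsDedekindDomain B]
    [Algebra B L] [IsFractionRing B L]
    (hB : ∀ z : L, (∃ b : B, algebraMap B L b = z) ↔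
      ((algebraMap (RatFunc k) L).comp (algebraMap (Polynomial k) (RatFunc k))).IsIntegralElem z)
    [Algebra (Polynomial k) L] [IsScalarTower (Polynomial k) (RatFunc k) L]
    [Algebra k L] [IsScalarTower k (Polynomial k) L] [IsScalarTower k (RatFunc k) L]
    [Algebra k B] [IsScalarTower k B L]
    (I : FractionalIdeal (nonZeroDivisors B) L) (hI : I ≠ 0)
    (qI : RatFunc k) (hqI0 : qI ≠ 0)
    (hqI : ∀ z : RatFunc k, algebraMap (RatFunc k) L z ∈ I ↔
      ∃ c : Polynomial k, z = qI * algebraMap (Polynomial k) (RatFunc k) c)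
    (Istar : FractionalIdeal (nonZeroDivisors B) L)
    (hIstar : Istar =
      FractionalIdeal.spanSingleton (nonZeroDivisors B) (algebraMap (RatFunc k) L qI)⁻¹ * I) :
    (∀ z : L, z ∈ Algebra.adjoin (Polynomial k) ({x} : Set L) →
      ∃ b : B, algebraMap B L b = z) ∧
    (∀ b : B, algebraMap B L b ∈ Istar) ∧
    Module.Finite k
      ((Submodule.restrictScalars k (Istar : Submodule B L)) ⧸
        (Submodule.comap (Submodule.restrictScalars k (Istar : Submodule B L)).subtype
          (Submodule.restrictScalars k
            (Subalgebra.toSubmodule (Algebra.adjoin (Polynomial k) ({x} : Set L)))))) ∧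
    (normExp k L B x Istar ≤ normIdx k L B x Istar ∧
      normIdx k L B x Istar ≤ n * normExp k L B x Istar) ∧
    (normIdx k L B x (1 : FractionalIdeal (nonZeroDivisors B) L) ≤ normIdx k L B x Istar ∧
      normExp k L B x (1 : FractionalIdeal (nonZeroDivisors B) L) ≤ normExp k L B x Istar) := by
  classical
  have hRL : algebraMap (Polynomial k) L
      = (algebraMap (RatFunc k) L).comp (algebraMap (Polynomial k) (RatFunc k)) :=
    IsScalarTower.algebraMap_eq _ _ _
  have hsmul_eq : ∀ (a : Polynomial k) (z : L),
      algebraMap (RatFunc k) L (algebraMap (Polynomial k) (RatFunc k) a) * z = a • z := by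
    intro a z
    rw [← IsScalarTower.algebraMap_apply, Algebra.smul_def]
  have hxint : IsIntegral (Polynomial k) x := by
    refine ⟨f, hfmonic, ?_⟩
    have h1 : Polynomial.aeval x f = 0 := by
      rw [← Polynomial.aeval_map_algebraMap (RatFunc k)]; exact hx
    rwa [Polynomial.aeval_def] at h1
  have hxintK : IsIntegral (RatFunc k) x := by
    refine ⟨f.map (algebraMap (Polynomial k) (RatFunc k)),
      hfmonic.map (algebraMap (Polynomial k) (RatFunc k)), ?_⟩
    rwa [Polynomial.aeval_def] at hx
  -- Part 1 : k[t][x] ⊆ B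
  have part1 : ∀ z : L, z ∈ Algebra.adjoin (Polynomial k) ({x} : Set L) →
      ∃ b : B, algebraMap B L b = z := by
    intro z hz
    have hle : Algebra.adjoin (Polynomial k) ({x} : Set L)
        ≤ integralClosure (Polynomial k) L :=
      Algebra.adjoin_le (Set.singleton_subset_iff.mpr hxint)
    have hzint : IsIntegral (Polynomial k) z := hle hz
    refine (hB z).mpr ?_
    rw [← hRL]
    exact hzint
  -- Part 2 : B ⊆ I*
  have hone : (1 : L) ∈ Istar := by
    rw [hIstar]
    have hqL : algebraMap (RatFunc k) L qI ∈ I := by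
      rw [hqI]
      exact ⟨1, by simp⟩
    have hqLne : algebraMap (RatFunc k) L qI ≠ 0 := by
      simpa using hqI0
    refine FractionalIdeal.mem_singleton_mul.mpr ⟨algebraMap (RatFunc k) L qI, hqL, ?_⟩
    rw [inv_mul_cancel₀ hqLne]
  have part2 : ∀ b : B, algebraMap B L b ∈ Istar := by
    intro b
    have := Submodule.smul_mem (Istar : Submodule B L) b hone
    rwa [Algebra.smul_def, mul_one] at this
  -- minimal polynomial and dimension
  have hminK : minpoly (RatFunc k) x = f.map (algebraMap (Polynomial k) (RatFunc k)) :=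
    (minpoly.eq_of_irreducible_of_monic hfirr hx
      (hfmonic.map (algebraMap (Polynomial k) (RatFunc k)))).symm
  have hdegn : (f.map (algebraMap (Polynomial k) (RatFunc k))).natDegree = n := by
    rw [hfmonic.natDegree_map]; exact hfn
  have htop : IntermediateField.adjoin (RatFunc k) ({x} : Set L) = ⊤ := by
    rw [eq_top_iff]
    intro z _
    have hz : z ∈ Algebra.adjoin (RatFunc k) ({x} : Set L) := by rw [hxgen]; trivial
    exact IntermediateField.algebra_adjoin_le_adjoin _ _ hz
  have hE := (IntermediateField.equivOfEq htop).trans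
    (IntermediateField.topEquiv (F := RatFunc k) (E := L))
  haveI hfdadj : FiniteDimensional (RatFunc k)
      (IntermediateField.adjoin (RatFunc k) ({x} : Set L)) := by
    exact IntermediateField.adjoin.finiteDimensional hxintK
  haveI hfd : FiniteDimensional (RatFunc k) L := hE.toLinearEquiv.finiteDimensional
  have hfinrank : Module.finrank (RatFunc k) L = n := by
    rw [← hE.toLinearEquiv.finrank_eq]
    rw [IntermediateField.adjoin.finrank hxintK, hminK, hdegn]
  haveI hsep : Algebra.IsSeparable (RatFunc k) L := by
    have hxsep : IsSeparable (RatFunc k) x := by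
      rw [IsSeparable, hminK]; exact hfsep
    haveI := (IntermediateField.isSeparable_adjoin_simple_iff_isSeparable
      (RatFunc k) L (x := x)).mpr hxsep
    exact AlgEquiv.Algebra.isSeparable hE
  -- finiteness of the integral closure
  haveI hCfin : Module.Finite (Polynomial k) ↥(integralClosure (Polynomial k) L) := by
    haveI : IsNoetherian (Polynomial k) ↥(integralClosure (Polynomial k) L) :=
      IsIntegralClosure.isNoetherian (Polynomial k) (RatFunc k) L
        ↥(integralClosure (Polynomial k) L)
    exact Module.finite_def.mpr (IsNoetherian.noetherian ⊤)
  set O : Submodule (Polynomial k) L :=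
    Subalgebra.toSubmodule (Algebra.adjoin (Polynomial k) ({x} : Set L)) with hO
  -- denominators into the order k[t][x]
  have hden : ∀ z : L, ∃ d : Polynomial k, d ≠ 0 ∧ d • z ∈ O := by
    intro z
    have hzmem : z ∈ Algebra.adjoin (RatFunc k) ({x} : Set L) := by rw [hxgen]; trivial
    rw [Algebra.adjoin_singleton_eq_range_aeval] at hzmem
    obtain ⟨g, hg⟩ := hzmem
    obtain ⟨b, hb⟩ := IsLocalization.integerNormalization_map_to_map
      (nonZeroDivisors (Polynomial k)) g
    refine ⟨(b : Polynomial k), nonZeroDivisors.coe_ne_zero b, ?_⟩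
    have h1 : Polynomial.aeval x (IsLocalization.integerNormalization
        (nonZeroDivisors (Polynomial k)) g) ∈ O := by
      show _ ∈ Algebra.adjoin (Polynomial k) ({x} : Set L)
      rw [Algebra.adjoin_singleton_eq_range_aeval]
      exact ⟨_, rfl⟩
    have h2 : ((b : Polynomial k)) • z = Polynomial.aeval x
        (IsLocalization.integerNormalization (nonZeroDivisors (Polynomial k)) g) := by
      conv_rhs => rw [← Polynomial.aeval_map_algebraMap (RatFunc k), hb]
      rw [← algebraMap_smul (RatFunc k) ((b : Polynomial k)) g,
        Polynomial.smul_eq_C_mul, map_mul, Polynomial.aeval_C, ← Algebra.smul_def,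
        algebraMap_smul]
      exact congrArg (fun w => ((b : Polynomial k)) • w) hg.symm
    rw [h2]; exact h1
  -- the restriction of a B-submodule of L to k[t]
  have hNex : ∀ S : Submodule B L, ∃ N : Submodule (Polynomial k) L,
      ∀ z : L, z ∈ N ↔ z ∈ S := by
    intro S
    refine ⟨{ carrier := S
              add_mem' := fun h1 h2 => S.add_mem h1 h2
              zero_mem' := S.zero_mem
              smul_mem' := ?_ }, fun z => Iff.rfl⟩
    intro p z hz
    have hint : IsIntegral (Polynomial k) (algebraMap (Polynomial k) L p) :=
      isIntegral_algebraMap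
    obtain ⟨b, hb⟩ := (hB _).mpr (by rw [← hRL]; exact hint)
    have : p • z = b • z := by
      rw [Algebra.smul_def, Algebra.smul_def, hb]
    show p • z ∈ S
    rw [this]
    exact S.smul_mem b hz
  obtain ⟨NI, hNI⟩ := hNex (Istar : Submodule B L)
  obtain ⟨N1, hN1⟩ := hNex ((1 : FractionalIdeal (nonZeroDivisors B) L) : Submodule B L)
  -- NI is finitely generated over k[t]
  have hNIfg : NI.FG := by
    obtain ⟨a, haS, haprop⟩ := Istar.isFractional
    have hu0 : algebraMap B L a ≠ 0 := by
      rw [map_ne_zero_iff _ (IsFractionRing.injective B L)]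
      exact nonZeroDivisors.ne_zero haS
    set u : L := algebraMap B L a with hu
    set Csub : Submodule (Polynomial k) L :=
      Subalgebra.toSubmodule (integralClosure (Polynomial k) L) with hCsub
    have hCfg : Csub.FG := Module.Finite.iff_fg.mp hCfin
    set φ : L →ₗ[Polynomial k] L := LinearMap.mulLeft (Polynomial k) u⁻¹ with hφ
    have hle : NI ≤ Submodule.map φ Csub := by
      intro z hz
      obtain ⟨c, hc⟩ := haprop z ((hNI z).mp hz)
      have hint : IsIntegral (Polynomial k) (algebraMap B L c) := by
        have := (hB (algebraMap B L c)).mp ⟨c, rfl⟩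
        rwa [← hRL] at this
      rw [hc, Algebra.smul_def] at hint
      refine ⟨u * z, hint, ?_⟩
      show u⁻¹ * (u * z) = z
      rw [← mul_assoc, inv_mul_cancel₀ hu0, one_mul]
    have hmapfg : (Submodule.map φ Csub).FG := hCfg.map φ
    haveI hnoe : IsNoetherian (Polynomial k) ↥(Submodule.map φ Csub) :=
      isNoetherian_of_fg_of_noetherian _ hmapfg
    have h1 : (Submodule.comap (Submodule.map φ Csub).subtype NI).FG :=
      IsNoetherian.noetherian _
    have h2 : Submodule.map (Submodule.map φ Csub).subtype
        (Submodule.comap (Submodule.map φ Csub).subtype NI) = NI := by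
      rw [Submodule.map_comap_subtype, inf_eq_right.mpr hle]
    rw [← h2]
    exact h1.map _
  -- a common denominator for NI into O
  have hann : ∃ a : Polynomial k, a ≠ 0 ∧ ∀ z : L, z ∈ NI → a • z ∈ O := by
    obtain ⟨s, hs⟩ := hNIfg
    choose dfun hd0 hdO using hden
    refine ⟨∏ z ∈ s, dfun z, Finset.prod_ne_zero_iff.mpr (fun z _ => hd0 z), ?_⟩
    have hspan : NI ≤ Submodule.comap
        (LinearMap.lsmul (Polynomial k) L (∏ z ∈ s, dfun z)) O := by
      rw [← hs]
      refine Submodule.span_le.mpr ?_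
      intro z hz
      show (∏ w ∈ s, dfun w) • z ∈ O
      obtain ⟨c, hc⟩ := Finset.dvd_prod_of_mem dfun hz
      rw [hc, mul_comm, mul_smul]
      exact O.smul_mem c (hdO z)
    intro z hz
    exact hspan hz
  -- quotient setup
  have hquot : ∀ (S : Submodule B L) (N : Submodule (Polynomial k) L),
      (∀ z : L, z ∈ N ↔ z ∈ S) →
      Nonempty (((Submodule.restrictScalars k S) ⧸
          (Submodule.comap (Submodule.restrictScalars k S).subtype
            (Submodule.restrictScalars k O))) ≃ₗ[k]
        (↥N ⧸ (Submodule.comap N.subtype O))) := by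
    intro S N hmem
    refine ⟨(Submodule.Quotient.equiv
        (Submodule.comap (Submodule.restrictScalars k S).subtype (Submodule.restrictScalars k O))
        ((Submodule.comap N.subtype O).restrictScalars k)
        ({ toFun := fun z => ⟨z.1, (hmem z.1).mpr z.2⟩
           invFun := fun z => ⟨z.1, (hmem z.1).mp z.2⟩
           map_add' := fun _ _ => rfl
           map_smul' := fun _ _ => rfl
           left_inv := fun z => rfl
           right_inv := fun z => rfl }) ?_).trans
      (Submodule.Quotient.restrictScalarsEquiv k (Submodule.comap N.subtype O))⟩
    ext y
    constructor
    · rintro ⟨w, hw, rfl⟩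
      exact hw
    · intro hy
      exact ⟨⟨y.1, (hmem y.1).mp y.2⟩, hy, rfl⟩
  obtain ⟨E⟩ := hquot (Istar : Submodule B L) NI hNI
  obtain ⟨E1⟩ := hquot ((1 : FractionalIdeal (nonZeroDivisors B) L) : Submodule B L) N1 hN1
  set OI' : Submodule (Polynomial k) ↥NI := Submodule.comap NI.subtype O with hOI'
  set O1' : Submodule (Polynomial k) ↥N1 := Submodule.comap N1.subtype O with hO1'
  -- NI is finite free over k[t] with rank at most n
  haveI hNIfin : Module.Finite (Polynomial k) ↥NI := Module.Finite.iff_fg.mpr hNIfg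
  haveI hnzsd : Module.IsTorsionFree (Polynomial k) L := by
    refine Module.isTorsionFree_iff_algebraMap_injective.mpr ?_
    rw [hRL]
    exact (algebraMap (RatFunc k) L).injective.comp (IsFractionRing.injective _ _)
  haveI : Module.Free (Polynomial k) ↥NI := Module.free_of_finite_type_torsion_free'
  set bNI := Module.Free.chooseBasis (Polynomial k) ↥NI with hbNI
  have hcard : Fintype.card (Module.Free.ChooseBasisIndex (Polynomial k) ↥NI) ≤ n := by
    have hli : LinearIndependent (Polynomial k)
        (fun i : Module.Free.ChooseBasisIndex (Polynomial k) ↥NI => ((bNI i : ↥NI) : L)) :=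
      bNI.linearIndependent.map' NI.subtype (Submodule.ker_subtype NI)
    rw [LinearIndependent.iff_fractionRing (Polynomial k) (RatFunc k)] at hli
    have := hli.fintype_card_le_finrank
    rwa [hfinrank] at this
  set m := Fintype.card (Module.Free.ChooseBasisIndex (Polynomial k) ↥NI) with hm
  set gQ : Fin m → (↥NI ⧸ OI') := fun j => Submodule.Quotient.mk
    (bNI ((Fintype.equivFin (Module.Free.ChooseBasisIndex (Polynomial k) ↥NI)).symm j)) with hgQdef
  have hgQ : Submodule.span (Polynomial k) (Set.range gQ) = ⊤ := by
    have h1 : Set.range gQ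
        = OI'.mkQ '' Set.range (bNI ∘ ⇑(Fintype.equivFin _).symm) := by
      rw [← Set.range_comp]; rfl
    rw [h1, Function.Surjective.range_comp (Equiv.surjective _) bNI,
      Submodule.span_image, bNI.span_eq, Submodule.map_top, Submodule.range_mkQ]
  -- the exponent set for I*
  set SI := {d : ℕ | ∃ a : Polynomial k, a ≠ 0 ∧ a.natDegree = d ∧
    ∀ z : L, z ∈ Istar → algebraMap (RatFunc k) L (algebraMap (Polynomial k) (RatFunc k) a) * z ∈
      Algebra.adjoin (Polynomial k) ({x} : Set L)} with hSI
  have hexpI : normExp k L B x Istar = sInf SI := rfl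
  have hSIne : SI.Nonempty := by
    obtain ⟨a, ha0, haO⟩ := hann
    refine ⟨a.natDegree, a, ha0, rfl, fun z hz => ?_⟩
    rw [hsmul_eq]
    exact haO z ((hNI z).mpr (FractionalIdeal.mem_coe.mpr hz))
  obtain ⟨a₀, ha₀0, ha₀deg, ha₀O⟩ := Nat.sInf_mem hSIne
  have ha₀Q : ∀ q : ↥NI ⧸ OI', a₀ • q = 0 := by
    intro q
    obtain ⟨y, rfl⟩ := Submodule.Quotient.mk_surjective OI' q
    rw [← Submodule.Quotient.mk_smul, Submodule.Quotient.mk_eq_zero]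
    show (↑(a₀ • y) : L) ∈ O
    rw [Submodule.coe_smul]
    have := ha₀O (y : L) (FractionalIdeal.mem_coe.mp ((hNI _).mp y.2))
    rwa [hsmul_eq] at this
  obtain ⟨hQfin, hQbound⟩ := aux_torsion_fin gQ hgQ a₀ ha₀0 ha₀Q
  haveI := hQfin
  have hidx : normIdx k L B x Istar = Module.finrank k (↥NI ⧸ OI') := by
    unfold normIdx
    exact E.finrank_eq
  -- part 3
  have hfin3 : Module.Finite k
      ((Submodule.restrictScalars k (Istar : Submodule B L)) ⧸
        (Submodule.comap (Submodule.restrictScalars k (Istar : Submodule B L)).subtype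
          (Submodule.restrictScalars k
            (Subalgebra.toSubmodule (Algebra.adjoin (Polynomial k) ({x} : Set L)))))) :=
    Module.Finite.equiv E.symm
  -- multiplication by t on the quotient and its characteristic polynomial
  set T : (↥NI ⧸ OI') →ₗ[k] (↥NI ⧸ OI') :=
    { toFun := fun q => (Polynomial.X : Polynomial k) • q
      map_add' := fun _ _ => smul_add _ _ _
      map_smul' := fun c q => (smul_comm (Polynomial.X : Polynomial k) c q) } with hT
  have hTapp : ∀ q : ↥NI ⧸ OI', T q = (Polynomial.X : Polynomial k) • q := fun _ => rfl
  have hXi : ∀ (i : ℕ) (q : ↥NI ⧸ OI'), (Polynomial.X ^ i : Polynomial k) • q = (T ^ i) q := by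
    intro i
    induction i with
    | zero => intro q; simp
    | succ j hj =>
      intro q
      rw [pow_succ, mul_smul, ← hTapp q, hj (T q), ← Module.End.mul_apply, ← pow_succ]
  have haction : ∀ (p : Polynomial k) (q : ↥NI ⧸ OI'), p • q = Polynomial.aeval T p q := by
    intro p
    induction p using Polynomial.induction_on' with
    | add p r hp hr =>
      intro q
      rw [add_smul, hp, hr, map_add, LinearMap.add_apply]
    | monomial i c =>
      intro q
      calc (Polynomial.monomial i c) • q
          = (c • (Polynomial.X ^ i : Polynomial k)) • q := by
            rw [Polynomial.smul_X_eq_monomial]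
        _ = c • ((Polynomial.X ^ i : Polynomial k) • q) := smul_assoc _ _ _
        _ = c • ((T ^ i) q) := by rw [hXi]
        _ = (c • (T ^ i)) q := rfl
        _ = (Polynomial.aeval T (Polynomial.monomial i c)) q := by
            rw [Polynomial.aeval_monomial, Algebra.algebraMap_eq_smul_one, smul_mul_assoc,
              one_mul]
  set χ := LinearMap.charpoly T with hχ
  have hχzero : ∀ z : L, z ∈ Istar →
      algebraMap (RatFunc k) L (algebraMap (Polynomial k) (RatFunc k) χ) * z ∈
        Algebra.adjoin (Polynomial k) ({x} : Set L) := by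
    intro z hz
    rw [hsmul_eq]
    have hzNI : z ∈ NI := (hNI z).mpr (FractionalIdeal.mem_coe.mpr hz)
    have h1 : χ • (Submodule.Quotient.mk (⟨z, hzNI⟩ : ↥NI) : ↥NI ⧸ OI') = 0 := by
      rw [haction, LinearMap.aeval_self_charpoly, LinearMap.zero_apply]
    rw [← Submodule.Quotient.mk_smul, Submodule.Quotient.mk_eq_zero] at h1
    have h2 : (↑(χ • (⟨z, hzNI⟩ : ↥NI)) : L) ∈ O := h1
    rwa [Submodule.coe_smul] at h2
  have hδ1 : normExp k L B x Istar ≤ normIdx k L B x Istar := by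
    rw [hexpI]
    refine Nat.sInf_le ?_
    exact ⟨χ, (T.charpoly_monic).ne_zero,
      by rw [hidx, hχ, T.charpoly_natDegree], hχzero⟩
  have hδ2 : normIdx k L B x Istar ≤ n * normExp k L B x Istar := by
    rw [hidx, hexpI, ← ha₀deg]
    exact le_trans hQbound (Nat.mul_le_mul_right _ hcard)
  -- comparison with B itself
  have hN1leNI : N1 ≤ NI := by
    intro z hz
    have hz1 : z ∈ (1 : FractionalIdeal (nonZeroDivisors B) L) :=
      FractionalIdeal.mem_coe.mp ((hN1 z).mp hz)
    obtain ⟨b, hb⟩ := (FractionalIdeal.mem_one_iff _).mp hz1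
    exact (hNI z).mpr (FractionalIdeal.mem_coe.mpr (hb ▸ part2 b))
  have hle' : O1' ≤ Submodule.comap (Submodule.inclusion hN1leNI) OI' := by
    intro y hy
    show ((Submodule.inclusion hN1leNI y : ↥NI) : L) ∈ O
    exact hy
  set φQ := Submodule.mapQ O1' OI' (Submodule.inclusion hN1leNI) hle' with hφQ
  have hφQinj : Function.Injective φQ := by
    refine (injective_iff_map_eq_zero φQ).mpr ?_
    intro q hq
    obtain ⟨y, rfl⟩ := Submodule.Quotient.mk_surjective _ q
    rw [hφQ, Submodule.mapQ_apply, Submodule.Quotient.mk_eq_zero] at hq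
    rw [Submodule.Quotient.mk_eq_zero]
    exact hq
  have hidx1 : normIdx k L B x (1 : FractionalIdeal (nonZeroDivisors B) L)
      = Module.finrank k (↥N1 ⧸ O1') := by
    unfold normIdx
    exact E1.finrank_eq
  have hcomp1 : normIdx k L B x (1 : FractionalIdeal (nonZeroDivisors B) L)
      ≤ normIdx k L B x Istar := by
    rw [hidx1, hidx]
    exact LinearMap.finrank_le_finrank_of_injective
      (f := φQ.restrictScalars k) hφQinj
  have hcomp2 : normExp k L B x (1 : FractionalIdeal (nonZeroDivisors B) L)
      ≤ normExp k L B x Istar := by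
    refine Nat.sInf_le ?_
    refine ⟨a₀, ha₀0, ha₀deg, ?_⟩
    intro z hz
    obtain ⟨b, hb⟩ := (FractionalIdeal.mem_one_iff _).mp hz
    exact ha₀O z (hb ▸ part2 b)
  exact ⟨part1, part2, hfin3, ⟨hδ1, hδ2⟩, hcomp1, hcomp2⟩
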